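/- Fix positive integers k ≤ t'. Let G be a graph where each vertex u is replaced by a gadget consisting of a center u₀ plus a path u₁,…,u_{t'+1} of 'yellow' vertices, with u₀ adjacent to u₁,…,u_{t'} (but not u_{t'+1}). Then in any color-preserving subgraph embedding g of the gadget graph G' into the gadget graph H' with |V(G')| = |V(H')|, centers map to centers, and whenever g(u₀) = v₀, we have g(u_i) = v_i for all 1 ≤ i ≤ t'+1. -/
import Mathlib


theorem stmt_19 {U W : Type*} [Fintype U] [Fintype W] (c k t' : ℕ)
    (hk : 1 ≤ k) (hkt : k ≤ t')
    (colU : U → Fin c) (colW : W → Fin c)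
    (G' : SimpleGraph (U × Fin (t' + 2))) (H' : SimpleGraph (W × Fin (t' + 2)))
    -- intra-gadget adjacency in G': the center (index 0) is adjacent to
    -- indices 1..t', and the yellow vertices 1..t'+1 form a path:
    (hG_intra : ∀ (u : U) (i j : Fin (t' + 2)), G'.Adj (u, i) (u, j) ↔
      ((i.val = 0 ∧ 1 ≤ j.val ∧ j.val ≤ t') ∨
       (j.val = 0 ∧ 1 ≤ i.val ∧ i.val ≤ t') ∨
       (1 ≤ i.val ∧ 1 ≤ j.val ∧ (i.val + 1 = j.val ∨ j.val + 1 = i.val))))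
    -- inter-gadget edges only between yellow vertices with indices in [1, t']:
    (hG_inter : ∀ (u v : U) (i j : Fin (t' + 2)), u ≠ v → G'.Adj (u, i) (v, j) →
      1 ≤ i.val ∧ i.val ≤ t' ∧ 1 ≤ j.val ∧ j.val ≤ t')
    -- the same structure for H':
    (hH_intra : ∀ (w : W) (i j : Fin (t' + 2)), H'.Adj (w, i) (w, j) ↔
      ((i.val = 0 ∧ 1 ≤ j.val ∧ j.val ≤ t') ∨
       (j.val = 0 ∧ 1 ≤ i.val ∧ i.val ≤ t') ∨
       (1 ≤ i.val ∧ 1 ≤ j.val ∧ (i.val + 1 = j.val ∨ j.val + 1 = i.val))))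
    (hH_inter : ∀ (v w : W) (i j : Fin (t' + 2)), v ≠ w → H'.Adj (v, i) (w, j) →
      1 ≤ i.val ∧ i.val ≤ t' ∧ 1 ≤ j.val ∧ j.val ≤ t')
    -- |V(G')| = |V(H')|:
    (hcard : Fintype.card U = Fintype.card W)
    -- a color-preserving subgraph embedding (centers keep the original color,
    -- the other gadget vertices are yellow, i.e. colored `Fin.last c`):
    (g : U × Fin (t' + 2) → W × Fin (t' + 2))
    (hinj : Function.Injective g)
    (hcol : ∀ x : U × Fin (t' + 2),
      (if (g x).2.val = 0 then (colW (g x).1).castSucc else Fin.last c) =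
      (if x.2.val = 0 then (colU x.1).castSucc else Fin.last c))
    (hedge : ∀ x y : U × Fin (t' + 2), G'.Adj x y → H'.Adj (g x) (g y)) :
    ∀ u : U, ∃ w : W, g (u, (0 : Fin (t' + 2))) = (w, (0 : Fin (t' + 2))) ∧
      ∀ i : Fin (t' + 2), 1 ≤ i.val → g (u, i) = (w, i) := by
  classical
  have ht1 : 1 ≤ t' := le_trans hk hkt
  have hv0 : ((0 : Fin (t' + 2))).val = 0 := rfl
  -- centers map to centers
  have hc0 : ∀ x : U × Fin (t' + 2), (g x).2.val = 0 ↔ x.2.val = 0 := by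
    intro x
    have h := hcol x
    constructor
    · intro h1
      by_contra h2
      rw [if_pos h1, if_neg h2] at h
      exact absurd h (ne_of_lt (Fin.castSucc_lt_last _))
    · intro h1
      by_contra h2
      rw [if_neg h2, if_pos h1] at h
      exact absurd h.symm (ne_of_lt (Fin.castSucc_lt_last _))
  set w : U → W := fun u => (g (u, 0)).1 with hw_def
  have hw0 : ∀ u, g (u, 0) = (w u, 0) := by
    intro u
    have h2 : (g (u, 0)).2.val = 0 := (hc0 (u, 0)).2 hv0
    exact Prod.ext rfl (Fin.ext h2)
  have hwinj : Function.Injective w := by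
    intro u u' h
    have heq : g (u, 0) = g (u', 0) := by rw [hw0, hw0, h]
    exact (Prod.ext_iff.1 (hinj heq)).1
  have hwbij : Function.Bijective w :=
    (Fintype.bijective_iff_injective_and_card w).2 ⟨hwinj, hcard⟩
  -- middle vertices stay in the same gadget with middle indices
  have hmid : ∀ (u : U) (i : Fin (t' + 2)), 1 ≤ i.val → i.val ≤ t' →
      (g (u, i)).1 = w u ∧ 1 ≤ (g (u, i)).2.val ∧ (g (u, i)).2.val ≤ t' := by
    intro u i h1 h2
    have hadj : G'.Adj (u, 0) (u, i) :=
      (hG_intra u 0 i).2 (Or.inl ⟨hv0, h1, h2⟩)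
    have hH : H'.Adj ((w u), (0 : Fin (t' + 2))) ((g (u, i)).1, (g (u, i)).2) := by
      have := hedge _ _ hadj
      rwa [hw0] at this
    by_cases hne : w u = (g (u, i)).1
    · rw [← hne] at hH
      rcases (hH_intra (w u) 0 (g (u, i)).2).1 hH with ⟨_, hb⟩ | ⟨_, hb, _⟩ | ⟨hb, _⟩
      · exact ⟨hne.symm, hb⟩
      · rw [hv0] at hb; omega
      · rw [hv0] at hb; omega
    · have := hH_inter (w u) ((g (u, i)).1) 0 (g (u, i)).2 hne hH
      rw [hv0] at this; omega
  -- per-gadget surjectivity onto middle indices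
  have hsurjmid : ∀ (u : U) (j : Fin (t' + 2)), 1 ≤ j.val → j.val ≤ t' →
      ∃ i : Fin (t' + 2), 1 ≤ i.val ∧ i.val ≤ t' ∧ g (u, i) = (w u, j) := by
    intro u j hj1 hj2
    let T := {i : Fin (t' + 2) // 1 ≤ i.val ∧ i.val ≤ t'}
    let e : T → T := fun i => ⟨(g (u, i.1)).2, (hmid u i.1 i.2.1 i.2.2).2⟩
    have einj : Function.Injective e := by
      intro a b hab
      have h1 := (hmid u a.1 a.2.1 a.2.2).1
      have h2 := (hmid u b.1 b.2.1 b.2.2).1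
      have hsnd : (g (u, a.1)).2 = (g (u, b.1)).2 := congrArg Subtype.val hab
      have heq : g (u, a.1) = g (u, b.1) := Prod.ext (h1.trans h2.symm) hsnd
      exact Subtype.ext (congrArg Prod.snd (hinj heq))
    have esurj : Function.Surjective e := Finite.injective_iff_surjective.1 einj
    obtain ⟨i, hi⟩ := esurj ⟨j, hj1, hj2⟩
    exact ⟨i.1, i.2.1, i.2.2,
      Prod.ext (hmid u i.1 i.2.1 i.2.2).1 (congrArg Subtype.val hi)⟩
  have pt : t' < t' + 2 := by omega
  have pt1 : t' + 1 < t' + 2 := by omega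
  -- the top vertex maps to a top vertex
  have hlastval : ∀ u : U, (g (u, ⟨t' + 1, pt1⟩)).2.val = t' + 1 := by
    intro u0
    have hne0 : (g (u0, ⟨t' + 1, pt1⟩)).2.val ≠ 0 := by
      intro h
      have h2 := (hc0 (u0, ⟨t' + 1, pt1⟩)).1 h
      simp at h2
    by_contra hne
    have hlt := (g (u0, ⟨t' + 1, pt1⟩)).2.isLt
    have hj1 : 1 ≤ (g (u0, ⟨t' + 1, pt1⟩)).2.val := by omega
    have hj2 : (g (u0, ⟨t' + 1, pt1⟩)).2.val ≤ t' := by omega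
    obtain ⟨u', hu'⟩ := hwbij.2 (g (u0, ⟨t' + 1, pt1⟩)).1
    obtain ⟨i, hi1, hi2, hi3⟩ := hsurjmid u' _ hj1 hj2
    rw [hu'] at hi3
    have heq : (u', i) = (u0, ⟨t' + 1, pt1⟩) := hinj hi3
    have hveq := congrArg (fun p : U × Fin (t' + 2) => p.2.val) heq
    simp at hveq
    omega
  intro u
  refine ⟨w u, hw0 u, ?_⟩
  -- top vertex stays in the gadget, and g(u,t') has index t'
  have htop : (g (u, ⟨t' + 1, pt1⟩)).1 = w u ∧
      (g (u, ⟨t', pt⟩)).2.val = t' := by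
    obtain ⟨hmT1, hmT2, hmT3⟩ := hmid u ⟨t', pt⟩ ht1 le_rfl
    have hL : (g (u, ⟨t' + 1, pt1⟩)).2.val = t' + 1 := hlastval u
    have hadj : G'.Adj (u, ⟨t', pt⟩) (u, ⟨t' + 1, pt1⟩) :=
      (hG_intra u _ _).2 (Or.inr (Or.inr ⟨ht1, show 1 ≤ t' + 1 by omega, Or.inl rfl⟩))
    have hH : H'.Adj ((g (u, ⟨t', pt⟩)).1, (g (u, ⟨t', pt⟩)).2)
        ((g (u, ⟨t' + 1, pt1⟩)).1, (g (u, ⟨t' + 1, pt1⟩)).2) :=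
      hedge _ _ hadj
    by_cases hne : (g (u, ⟨t', pt⟩)).1 = (g (u, ⟨t' + 1, pt1⟩)).1
    · rw [← hne] at hH
      rcases (hH_intra _ _ _).1 hH with ⟨hb, _⟩ | ⟨hb, _⟩ | ⟨_, _, hb | hb⟩
      · omega
      · omega
      · exact ⟨hne.symm.trans hmT1, by omega⟩
      · omega
    · have hcon := hH_inter _ _ _ _ hne hH
      omega
  -- one step of the downward induction along the path
  have hstep : ∀ (n : ℕ) (hn : 1 ≤ n) (hn1 : n + 1 ≤ t'),
      (g (u, ⟨n + 1, by omega⟩)).2.val = n + 1 →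
      (n + 2 ≤ t' → (g (u, ⟨n + 2, by omega⟩)).2.val = n + 2) →
      (g (u, ⟨n, by omega⟩)).2.val = n := by
    intro n hn hn1 h1 h2
    have pn : n < t' + 2 := by omega
    have pn1 : n + 1 < t' + 2 := by omega
    show (g (u, ⟨n, pn⟩)).2.val = n
    have h1' : (g (u, ⟨n + 1, pn1⟩)).2.val = n + 1 := h1
    have hadj : G'.Adj (u, ⟨n, pn⟩) (u, ⟨n + 1, pn1⟩) :=
      (hG_intra u _ _).2 (Or.inr (Or.inr ⟨hn, show 1 ≤ n + 1 by omega, Or.inl rfl⟩))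
    obtain ⟨hma1, hma2, hma3⟩ := hmid u ⟨n, pn⟩ hn (show n ≤ t' by omega)
    obtain ⟨hmb1, hmb2, hmb3⟩ := hmid u ⟨n + 1, pn1⟩ (show 1 ≤ n + 1 by omega) hn1
    have hH : H'.Adj ((g (u, ⟨n, pn⟩)).1, (g (u, ⟨n, pn⟩)).2)
        ((g (u, ⟨n + 1, pn1⟩)).1, (g (u, ⟨n + 1, pn1⟩)).2) :=
      hedge _ _ hadj
    rw [hma1, hmb1] at hH
    rcases (hH_intra _ _ _).1 hH with ⟨hb, _⟩ | ⟨hb, _⟩ | ⟨_, _, hb | hb⟩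
    · omega
    · omega
    · omega
    · exfalso
      have hn2 : n + 2 ≤ t' := by omega
      have pn2 : n + 2 < t' + 2 := by omega
      have hval2 : (g (u, ⟨n + 2, pn2⟩)).2.val = n + 2 := h2 hn2
      obtain ⟨hc1, -, -⟩ := hmid u ⟨n + 2, pn2⟩ (show 1 ≤ n + 2 by omega) hn2
      have heq : g (u, ⟨n, pn⟩) = g (u, ⟨n + 2, pn2⟩) :=
        Prod.ext (hma1.trans hc1.symm) (Fin.ext (by omega))
      have hcc := congrArg (fun p : U × Fin (t' + 2) => p.2.val) (hinj heq)
      simp at hcc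
  -- the downward induction itself
  have hR : ∀ kk : ℕ, ∀ (m : ℕ) (hm : m ≤ kk) (n : ℕ) (hn : 1 ≤ n)
      (hnm : n + m = t'), (g (u, ⟨n, by omega⟩)).2.val = n := by
    intro kk
    induction kk with
    | zero =>
      intro m hm n hn hnm
      have hm0 : m = 0 := by omega
      have hnt : n = t' := by omega
      subst hnt
      exact htop.2
    | succ kk ih =>
      intro m hm n hn hnm
      by_cases hmk : m ≤ kk
      · exact ih m hmk n hn hnm
      · have hm' : m = kk + 1 := by omega
        refine hstep n hn (by omega) ?_ ?_
        · exact ih kk le_rfl (n + 1) (by omega) (by omega)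
        · intro h2le
          exact ih (kk - 1) (by omega) (n + 2) (by omega) (by omega)
  intro i hi
  have hilt := i.isLt
  rcases Nat.lt_or_ge i.val (t' + 1) with hlt | hge
  · have h2 : i.val ≤ t' := by omega
    have hv : (g (u, ⟨i.val, by omega⟩)).2.val = i.val :=
      hR (t' - i.val) (t' - i.val) le_rfl i.val hi (by omega)
    have hieq : (⟨i.val, by omega⟩ : Fin (t' + 2)) = i := Fin.ext rfl
    rw [hieq] at hv
    exact Prod.ext (hmid u i hi h2).1 (Fin.ext hv)
  · have hieq : i = (⟨t' + 1, pt1⟩ : Fin (t' + 2)) := Fin.ext (show i.val = t' + 1 by omega)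
    rw [hieq]
    exact Prod.ext htop.1 (Fin.ext (by rw [hlastval u]))
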